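/- If G is a finite subgroup of the unit quaternions that is closed under negation and conjugation, then G, viewed as a set of vectors in the 4-dimensional Euclidean space ℍ, is a root system: it meets each line ℝg in exactly {g, -g}, and is invariant under the reflection in the hyperplane orthogonal to any of its elements. -/

import Mathlib

/-- The real inner product ⟨p,q⟩ = ½(pq̄ + qp̄) on the quaternions. -/
noncomputable def quatInner (p q : Quaternion ℝ) : ℝ :=
  ((p * star q + q * star p) / 2).re

theorem stmt_7 (G : Set (Quaternion ℝ)) (hfin : G.Finite)
    (hnorm : ∀ g ∈ G, ‖g‖ = 1)
    (hone : (1 : Quaternion ℝ) ∈ G)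
    (hmul : ∀ g ∈ G, ∀ h ∈ G, g * h ∈ G)
    (hinv : ∀ g ∈ G, g⁻¹ ∈ G)
    (hneg : (-1 : Quaternion ℝ) ∈ G) :
    -- (1) G meets each line ℝg, g ∈ G, in exactly {g, -g}
    (∀ g ∈ G, {x : Quaternion ℝ | ∃ t : ℝ, x = t • g} ∩ G = {g, -g}) ∧
    -- (2) G is invariant under the reflection in (the hyperplane orthogonal to) any of its elements
    (∀ g ∈ G, ∀ h ∈ G, h - (2 * quatInner g h) • g ∈ G) := by
  constructor
  · intro g hg
    ext x
    simp only [Set.mem_inter_iff, Set.mem_setOf_eq, Set.mem_insert_iff,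
      Set.mem_singleton_iff]
    constructor
    · rintro ⟨⟨t, rfl⟩, hx⟩
      have h1 : ‖t • g‖ = 1 := hnorm _ hx
      rw [norm_smul, hnorm g hg, mul_one, Real.norm_eq_abs] at h1
      rcases abs_eq (by norm_num : (0:ℝ) ≤ 1) |>.mp h1 with ht | ht
      · left; rw [ht, one_smul]
      · right; rw [ht, neg_smul, one_smul]
    · rintro (rfl | rfl)
      · exact ⟨⟨1, (one_smul _ _).symm⟩, hg⟩
      · refine ⟨⟨-1, ?_⟩, ?_⟩
        · rw [neg_smul, one_smul]
        · have := hmul _ hneg _ hg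
          rwa [neg_one_mul] at this
  · intro g hg h hh
    have hng : Quaternion.normSq g = 1 := by
      rw [Quaternion.normSq_eq_norm_mul_self, hnorm g hg, mul_one]
    have hnh : Quaternion.normSq h = 1 := by
      rw [Quaternion.normSq_eq_norm_mul_self, hnorm h hh, mul_one]
    have hinvh : star h = h⁻¹ := by
      rw [Quaternion.inv_def, hnh, inv_one, one_smul]
    have hq : quatInner g h = (g * star h).re := by
      unfold quatInner
      have : h * star g = star (g * star h) := by
        rw [star_mul, star_star]
      rw [this, Quaternion.self_add_star']
      rw [show ((2:Quaternion ℝ)) = ((2:ℝ):Quaternion ℝ) by norm_cast,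
        ← Quaternion.coe_div]
      simp
    have hb : ((2 * quatInner g h : ℝ) : Quaternion ℝ) = g * star h + h * star g := by
      have : h * star g = star (g * star h) := by rw [star_mul, star_star]
      rw [this, Quaternion.self_add_star', hq]
    have hsg : star g * g = 1 := by
      rw [Quaternion.star_mul_self, hng, Quaternion.coe_one]
    have key : h - (2 * quatInner g h) • g = -1 * (g * (h⁻¹ * g)) := by
      rw [← Quaternion.coe_mul_eq_smul, hb, ← hinvh, add_mul, mul_assoc h, hsg,
        mul_one, neg_one_mul, mul_assoc]
      abel
    rw [key]
    exact hmul _ hneg _ (hmul _ hg _ (hmul _ (hinv _ hh) _ hg))
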